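/- For every integer n ≥ 5, the geodesic path number of the wheel graph W_n on n vertices is (n − 1)(n + 2)/2; that is, t_gp(W_n) = (n − 1)(n + 2)/2. -/

import Mathlib

open SimpleGraph Finset

/-- A walk in `G` is a *geodesic walk* if it is a nontrivial path whose length equals
the distance in `G` between its endpoints. -/
def SimpleGraph.IsGeodesicWalk {V : Type*} (G : SimpleGraph V) {u v : V}
    (p : G.Walk u v) : Prop :=
  p.IsPath ∧ p.length = G.dist u v ∧ 0 < p.length

/-- The geodesic paths of `G`, where a path and its reverse are identified by
recording the (finite) set of edges of the path.  (A nontrivial path is determined,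
up to reversal, by its edge set.) -/
def SimpleGraph.geodesicPathSets {V : Type*} [DecidableEq V] (G : SimpleGraph V) :
    Set (Finset (Sym2 V)) :=
  {S | ∃ (u v : V) (p : G.Walk u v), G.IsGeodesicWalk p ∧ p.edges.toFinset = S}

/-- The geodesic path number `t_gp(G)`: the number of geodesic paths of `G`. -/
noncomputable def SimpleGraph.tgp {V : Type*} [DecidableEq V] (G : SimpleGraph V) : ℕ :=
  G.geodesicPathSets.ncard

/-- `f` is a geodesic Leech labeling of `G`: an edge labeling by positive integers such
that the weights of the geodesic paths of `G` are exactly `1, 2, …, t_gp(G)`,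
each occurring exactly once. -/
def SimpleGraph.IsGeodesicLeechLabeling {V : Type*} [DecidableEq V] (G : SimpleGraph V)
    (f : Sym2 V → ℕ) : Prop :=
  (∀ e ∈ G.edgeSet, 1 ≤ f e) ∧
    Set.BijOn (fun S => ∑ e ∈ S, f e) G.geodesicPathSets (Set.Icc 1 G.tgp)

/-- The wheel graph on `m + 1` vertices: a cycle on `m` vertices (the vertices `some i`)
together with a universal hub vertex `none` adjacent to every cycle vertex. -/
def wheelGraph (m : ℕ) : SimpleGraph (Option (Fin m)) :=
  SimpleGraph.fromRel (fun x y =>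
    (x = none ∧ y ≠ none) ∨
    (∃ i j : Fin m, x = some i ∧ y = some j ∧ (SimpleGraph.cycleGraph m).Adj i j))

/-! ### Auxiliary material -/

section Aux

open Fin.NatCast Fin.CommRing

variable {m : ℕ}

instance (m : ℕ) : DecidableRel (wheelGraph m).Adj := fun a b =>
  decidable_of_iff _ (SimpleGraph.fromRel_adj _ a b).symm

lemma wheel_adj_none_some (i : Fin m) : (wheelGraph m).Adj none (some i) := by
  rw [wheelGraph, SimpleGraph.fromRel_adj]
  exact ⟨by simp, Or.inl (Or.inl ⟨rfl, by simp⟩)⟩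

lemma wheel_adj_some_some {i j : Fin m} :
    (wheelGraph m).Adj (some i) (some j) ↔ (SimpleGraph.cycleGraph m).Adj i j := by
  rw [wheelGraph, SimpleGraph.fromRel_adj]
  constructor
  · rintro ⟨hne, (⟨h, -⟩ | ⟨a, b, ha, hb, hab⟩) | (⟨h, -⟩ | ⟨a, b, ha, hb, hab⟩)⟩
    · simp at h
    · injection ha with ha; injection hb with hb; subst ha; subst hb; exact hab
    · simp at h
    · injection ha with ha; injection hb with hb; subst ha; subst hb; exact hab.symm
  · intro h
    exact ⟨by simpa using h.ne, Or.inl (Or.inr ⟨i, j, rfl, rfl, h⟩)⟩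

lemma fin_val_one' [NeZero m] (hm : 2 ≤ m) : ((1 : Fin m)).val = 1 := by
  obtain ⟨k, rfl⟩ : ∃ k, m = k + 2 := ⟨m - 2, by omega⟩
  rfl

lemma cyc_adj_iff [NeZero m] (hm : 4 ≤ m) {i k : Fin m} :
    (SimpleGraph.cycleGraph m).Adj i k ↔ i = k + 1 ∨ i = k - 1 := by
  rw [SimpleGraph.cycleGraph_adj']
  constructor
  · rintro (h | h)
    · left
      have h2 : i - k = 1 := Fin.ext (by rw [h, fin_val_one' (by omega)])
      rw [sub_eq_iff_eq_add] at h2; rw [h2, add_comm]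
    · right
      have h2 : k - i = 1 := Fin.ext (by rw [h, fin_val_one' (by omega)])
      rw [sub_eq_iff_eq_add] at h2; rw [h2]; ring
  · rintro (h | h)
    · left
      have h2 : i - k = 1 := by rw [h]; ring
      rw [h2]; exact fin_val_one' (by omega)
    · right
      have h2 : k - i = 1 := by rw [h]; ring
      rw [h2]; exact fin_val_one' (by omega)

/-- reduce `Fin` shift equations to ℕ equations -/
lemma fin_shift_eq [NeZero m] (k : Fin m) {a b : ℕ} (ha : a < m) (hb : b < m) :
    k + (a : Fin m) = k + (b : Fin m) ↔ a = b := by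
  constructor
  · intro h
    have h2 := add_left_cancel h
    have h3 := congrArg Fin.val h2
    rwa [Fin.val_natCast, Fin.val_natCast, Nat.mod_eq_of_lt ha, Nat.mod_eq_of_lt hb] at h3
  · rintro rfl; rfl

lemma fin_neg_one [NeZero m] (hm : 4 ≤ m) : ((m - 1 : ℕ) : Fin m) = -1 := by
  have h : ((m - 1 : ℕ) : Fin m) + 1 = 0 := by
    have : ((m - 1 : ℕ) : Fin m) + ((1 : ℕ) : Fin m) = ((m - 1 + 1 : ℕ) : Fin m) := by
      push_cast; ring
    rw [show ((1:ℕ) : Fin m) = 1 by push_cast; ring] at this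
    rw [this, show m - 1 + 1 = m by omega, Fin.natCast_self]
  linear_combination h

lemma fin_sub_one_eq [NeZero m] (hm : 4 ≤ m) (k : Fin m) : k - 1 = k + ((m - 1 : ℕ) : Fin m) := by
  rw [fin_neg_one hm]; ring

lemma fin_one_eq [NeZero m] (hm : 4 ≤ m) : (1 : Fin m) = ((1 : ℕ) : Fin m) := by push_cast; ring

lemma fin_two_eq [NeZero m] (hm : 4 ≤ m) : (2 : Fin m) = ((2 : ℕ) : Fin m) := by push_cast; ring

lemma fin_sub_ne_add [NeZero m] (hm : 4 ≤ m) (k : Fin m) : k - 1 ≠ k + 1 := by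
  rw [fin_sub_one_eq hm, fin_one_eq hm, Ne, fin_shift_eq k (by omega) (by omega)]
  omega

lemma fin_sub_ne_self [NeZero m] (hm : 4 ≤ m) (k : Fin m) : k - 1 ≠ k := by
  rw [fin_sub_one_eq hm, Ne]
  nth_rewrite 2 [show k = k + ((0:ℕ) : Fin m) by push_cast; ring]
  rw [fin_shift_eq k (by omega) (by omega)]
  omega

lemma fin_add_ne_self [NeZero m] (hm : 4 ≤ m) (k : Fin m) : k + 1 ≠ k := by
  rw [fin_one_eq hm, Ne]
  nth_rewrite 2 [show k = k + ((0:ℕ) : Fin m) by push_cast; ring]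
  rw [fin_shift_eq k (by omega) (by omega)]
  omega

lemma fin_self_ne_add_two [NeZero m] (hm : 4 ≤ m) (k : Fin m) : k ≠ k + 2 := by
  rw [fin_two_eq hm, Ne]
  nth_rewrite 1 [show k = k + ((0:ℕ) : Fin m) by push_cast; ring]
  rw [fin_shift_eq k (by omega) (by omega)]
  omega

lemma cyc_not_adj_sub_add [NeZero m] (hm : 4 ≤ m) (k : Fin m) :
    ¬ (SimpleGraph.cycleGraph m).Adj (k - 1) (k + 1) := by
  rw [cyc_adj_iff hm]
  push_neg
  constructor
  · intro h
    rw [show k + 1 + 1 = k + 2 by ring] at h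
    rw [fin_sub_one_eq hm, fin_two_eq hm, fin_shift_eq k (by omega) (by omega)] at h
    omega
  · intro h
    rw [show k + 1 - 1 = k by ring] at h
    exact fin_sub_ne_self hm k h

lemma cyc_adj_add_one [NeZero m] (hm : 4 ≤ m) (k : Fin m) :
    (SimpleGraph.cycleGraph m).Adj k (k + 1) := by
  rw [cyc_adj_iff hm]; right; ring

lemma cyc_adj_sub_one [NeZero m] (hm : 4 ≤ m) (k : Fin m) :
    (SimpleGraph.cycleGraph m).Adj (k - 1) k := by
  rw [cyc_adj_iff hm]; exact Or.inr rfl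

lemma wheel_dist_le_two (u v : Option (Fin m)) : (wheelGraph m).dist u v ≤ 2 := by
  match u, v with
  | none, none => simp [SimpleGraph.dist_self]
  | none, some j =>
    exact le_trans (SimpleGraph.dist_le ((wheel_adj_none_some j).toWalk)) (by norm_num)
  | some i, none =>
    exact le_trans (SimpleGraph.dist_le ((wheel_adj_none_some i).symm.toWalk)) (by norm_num)
  | some i, some j =>
    exact SimpleGraph.dist_le
      (Walk.cons (wheel_adj_none_some i).symm (Walk.cons (wheel_adj_none_some j) Walk.nil))

lemma singleton_mem_gps {W : Type*} [DecidableEq W] {G : SimpleGraph W} {u v : W}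
    (h : G.Adj u v) : ({s(u,v)} : Finset (Sym2 W)) ∈ G.geodesicPathSets := by
  refine ⟨u, v, Walk.cons h Walk.nil, ⟨?_, ?_, ?_⟩, ?_⟩
  · simp [Walk.isPath_def, h.ne]
  · simp [SimpleGraph.dist_eq_one_iff_adj.mpr h]
  · simp
  · simp

lemma pair_mem_gps {W : Type*} [DecidableEq W] {G : SimpleGraph W} {u w v : W}
    (h1 : G.Adj u w) (h2 : G.Adj w v) (hne : u ≠ v) (hna : ¬ G.Adj u v)
    (hd : G.dist u v ≤ 2) :
    ({s(u,w), s(w,v)} : Finset (Sym2 W)) ∈ G.geodesicPathSets := by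
  have hdist : G.dist u v = 2 := by
    have h0 : G.dist u v ≠ 0 := by
      intro h0
      rcases SimpleGraph.dist_eq_zero_iff_eq_or_not_reachable.mp h0 with h | h
      · exact hne h
      · exact h ⟨Walk.cons h1 (Walk.cons h2 Walk.nil)⟩
    have h1' : G.dist u v ≠ 1 := fun h => hna (SimpleGraph.dist_eq_one_iff_adj.mp h)
    omega
  refine ⟨u, v, Walk.cons h1 (Walk.cons h2 Walk.nil), ⟨?_, by simp [hdist], by simp⟩, by simp⟩
  simp [Walk.isPath_def, h1.ne, h2.ne, hne]

lemma finset_pair_eq_pair_iff {α : Type*} [DecidableEq α] {a b c d : α} :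
    ({a, b} : Finset α) = {c, d} ↔ (a = c ∧ b = d) ∨ (a = d ∧ b = c) := by
  rw [← Finset.coe_inj]
  simp only [Finset.coe_insert, Finset.coe_singleton]
  exact Set.pair_eq_pair_iff

/-- The pair-of-hub-edges map. -/
def hubPair (m : ℕ) : Sym2 (Fin m) → Finset (Sym2 (Option (Fin m))) :=
  Sym2.lift ⟨fun i j => {s((none : Option (Fin m)), some i), s((none : Option (Fin m)), some j)},
    fun i j => Finset.pair_comm _ _⟩

@[simp] lemma hubPair_mk (i j : Fin m) :
    hubPair m s(i, j) = {s((none : Option (Fin m)), some i), s((none : Option (Fin m)), some j)} :=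
  rfl

/-- The collection of edge sets of geodesic paths in the wheel, as an explicit finite set. -/
def wheelT (m : ℕ) [NeZero m] : Finset (Finset (Sym2 (Option (Fin m)))) :=
  (Finset.univ.image fun i : Fin m => ({s((none : Option (Fin m)), some i)} : Finset _)) ∪
  (Finset.univ.image fun k : Fin m => ({s((some k : Option (Fin m)), some (k+1))} : Finset _)) ∪
  (((SimpleGraph.cycleGraph m)ᶜ.edgeFinset).image (hubPair m)) ∪
  (Finset.univ.image fun k : Fin m =>
    ({s((some (k-1) : Option (Fin m)), some k), s((some k : Option (Fin m)), some (k+1))} : Finset _))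

lemma gps_eq_wheelT [NeZero m] (hm : 4 ≤ m) :
    (wheelGraph m).geodesicPathSets = ↑(wheelT m) := by
  ext S
  simp only [Finset.coe_union, Set.mem_union, wheelT, Finset.coe_image, Set.mem_image,
    Finset.mem_coe, Finset.mem_image, Finset.mem_univ, true_and]
  constructor
  · rintro ⟨u, v, p, ⟨hp, hlen, hpos⟩, rfl⟩
    have hd2 := wheel_dist_le_two u v
    match p with
    | .nil => simp at hpos
    | .cons (w := w) h (.cons h2 (.cons h3 q)) =>
      exfalso
      simp only [Walk.length_cons] at hlen
      omega
    | .cons h .nil =>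
      -- length-one geodesics: the edges
      left
      simp only [Walk.edges_cons, Walk.edges_nil, List.toFinset_cons, List.toFinset_nil,
        LawfulSingleton.insert_empty_eq]
      match u, v with
      | none, none => exact absurd rfl h.ne
      | none, some j => exact Or.inl (Or.inl ⟨j, rfl⟩)
      | some i, none =>
        refine Or.inl (Or.inl ⟨i, ?_⟩)
        rw [Sym2.eq_swap]
      | some i, some j =>
        rw [wheel_adj_some_some, cyc_adj_iff hm] at h
        rcases h with h | h
        · refine Or.inl (Or.inr ⟨j, ?_⟩)
          rw [h, Sym2.eq_swap]
        · refine Or.inl (Or.inr ⟨i, ?_⟩)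
          have : j = i + 1 := by rw [h]; ring
          rw [this]
    | .cons (v := w) h1 (.cons h2 .nil) =>
      -- length-two geodesics
      have hlen2 : (wheelGraph m).dist u v = 2 := by
        simp only [Walk.length_cons, Walk.length_nil] at hlen
        omega
      have hne : u ≠ v := by
        rw [Walk.isPath_def] at hp
        simp only [Walk.support_cons, Walk.support_nil, List.nodup_cons, List.mem_cons,
          List.mem_singleton, List.not_mem_nil] at hp
        tauto
      have hna : ¬ (wheelGraph m).Adj u v := by
        intro hadj
        have := SimpleGraph.dist_eq_one_iff_adj.mpr hadj
        omega
      simp only [Walk.edges_cons, Walk.edges_nil, List.toFinset_cons, List.toFinset_nil,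
        LawfulSingleton.insert_empty_eq]
      match u, w, v with
      | none, none, _ => exact absurd rfl h1.ne
      | _, none, none => exact absurd rfl h2.ne
      | some i, none, some j =>
        have hne' : i ≠ j := fun h => hne (by rw [h])
        have hnc : ¬ (SimpleGraph.cycleGraph m).Adj i j := fun h =>
          hna (wheel_adj_some_some.mpr h)
        refine Or.inl (Or.inr ⟨s(i, j), ?_, ?_⟩)
        · rw [SimpleGraph.mem_edgeFinset, SimpleGraph.mem_edgeSet, SimpleGraph.compl_adj]
          exact ⟨hne', hnc⟩
        · rw [hubPair_mk, show s((some i : Option (Fin m)), none) = s((none : Option (Fin m)), some i) from Sym2.eq_swap]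
      | none, some k, some j => exact absurd (wheel_adj_none_some j) hna
      | some i, some k, none => exact absurd (wheel_adj_none_some i).symm hna
      | none, some k, none => exact absurd rfl hne
      | some i, some k, some j =>
        have hik : i = k + 1 ∨ i = k - 1 := by
          rw [wheel_adj_some_some, cyc_adj_iff hm] at h1; exact h1
        have hjk : j = k + 1 ∨ j = k - 1 := by
          rw [wheel_adj_some_some] at h2
          rw [cyc_adj_iff hm] at *
          rcases h2 with h | h
          · right; rw [h]; ring
          · left; rw [h]; ring
        have hij : i ≠ j := fun h => hne (by rw [h])
        refine Or.inr ⟨k, ?_⟩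
        rcases hik with rfl | rfl <;> rcases hjk with h | h
        · exact absurd h.symm hij
        · subst h
          rw [show s((some (k+1) : Option (Fin m)), some k) = s((some k : Option (Fin m)), some (k+1)) from Sym2.eq_swap,
            show s((some k : Option (Fin m)), some (k-1)) = s((some (k-1) : Option (Fin m)), some k) from Sym2.eq_swap,
            Finset.pair_comm]
        · subst h; rfl
        · exact absurd h.symm hij
  · rintro (((⟨i, rfl⟩ | ⟨k, rfl⟩) | ⟨e, he, rfl⟩) | ⟨k, rfl⟩)
    · exact singleton_mem_gps (wheel_adj_none_some i)
    · exact singleton_mem_gps (wheel_adj_some_some.mpr (cyc_adj_add_one hm k))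
    · induction e with
      | _ i j =>
        rw [SimpleGraph.mem_edgeFinset, SimpleGraph.mem_edgeSet, SimpleGraph.compl_adj] at he
        obtain ⟨hne, hnc⟩ := he
        rw [hubPair_mk,
          show s((none : Option (Fin m)), some i) = s((some i : Option (Fin m)), none) from Sym2.eq_swap]
        exact pair_mem_gps (wheel_adj_none_some i).symm (wheel_adj_none_some j)
          (by simp [hne]) (fun h => hnc (wheel_adj_some_some.mp h)) (wheel_dist_le_two _ _)
    · exact pair_mem_gps
        (wheel_adj_some_some.mpr (cyc_adj_sub_one hm k))
        (wheel_adj_some_some.mpr (cyc_adj_add_one hm k))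
        (by simpa using fin_sub_ne_add hm k)
        (fun h => cyc_not_adj_sub_add hm k (wheel_adj_some_some.mp h))
        (wheel_dist_le_two _ _)


lemma fin_cast_ne_zero [NeZero m] (hm : 4 ≤ m) {c : ℕ} (hc1 : 1 ≤ c) (hc : c < m) :
    ((c : ℕ) : Fin m) ≠ 0 := by
  intro h
  rw [Fin.natCast_eq_zero] at h
  exact absurd (Nat.le_of_dvd (by omega) h) (by omega)

lemma fin_one_ne_zero'' [NeZero m] (hm : 4 ≤ m) : (1 : Fin m) ≠ 0 := by
  have := fin_cast_ne_zero (m := m) hm (c := 1) le_rfl (by omega)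
  simpa using this

lemma fin_two_ne_zero'' [NeZero m] (hm : 4 ≤ m) : (2 : Fin m) ≠ 0 := by
  have := fin_cast_ne_zero (m := m) hm (c := 2) (by omega) (by omega)
  simpa using this

lemma fin_three_ne_zero'' [NeZero m] (hm : 4 ≤ m) : (3 : Fin m) ≠ 0 := by
  have := fin_cast_ne_zero (m := m) hm (c := 3) (by omega) (by omega)
  simpa using this

lemma card_T1h [NeZero m] (hm : 4 ≤ m) :
    (Finset.univ.image fun i : Fin m =>
      ({s((none : Option (Fin m)), some i)} : Finset (Sym2 (Option (Fin m))))).card = m := by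
  rw [Finset.card_image_of_injective _ ?_, Finset.card_univ, Fintype.card_fin]
  intro i j h
  simp only [Finset.singleton_inj, Sym2.eq_iff] at h
  rcases h with ⟨-, h⟩ | ⟨h, -⟩ <;> simp_all

lemma card_T1c [NeZero m] (hm : 4 ≤ m) :
    (Finset.univ.image fun k : Fin m =>
      ({s((some k : Option (Fin m)), some (k+1))} : Finset (Sym2 (Option (Fin m))))).card = m := by
  rw [Finset.card_image_of_injective _ ?_, Finset.card_univ, Fintype.card_fin]
  intro k k' h
  simp only [Finset.singleton_inj, Sym2.eq_iff, Option.some.injEq] at h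
  rcases h with ⟨h, -⟩ | ⟨h1, h2⟩
  · exact h
  · exfalso
    apply fin_two_ne_zero'' hm
    linear_combination h2 - h1

lemma hub_edge_inj {a b : Fin m}
    (h : s((none : Option (Fin m)), some a) = s((none : Option (Fin m)), some b)) : a = b := by
  rw [Sym2.eq_iff] at h
  rcases h with ⟨-, h⟩ | ⟨h, -⟩
  · simpa using h
  · exact absurd h (by simp)

lemma card_T2h [NeZero m] (hm : 4 ≤ m) :
    (((SimpleGraph.cycleGraph m)ᶜ.edgeFinset).image (hubPair m)).card
      = ((SimpleGraph.cycleGraph m)ᶜ.edgeFinset).card := by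
  apply Finset.card_image_of_injOn
  intro e1 he1 e2 he2 h
  induction e1 with
  | _ i j =>
    induction e2 with
    | _ i' j' =>
      simp only [hubPair_mk] at h
      rw [finset_pair_eq_pair_iff] at h
      rcases h with ⟨h1, h2⟩ | ⟨h1, h2⟩
      · rw [hub_edge_inj h1, hub_edge_inj h2]
      · rw [hub_edge_inj h1, hub_edge_inj h2, Sym2.eq_swap]

lemma card_compl_cycle (hm : 4 ≤ m) :
    2 * ((SimpleGraph.cycleGraph m)ᶜ.edgeFinset).card = m * (m - 3) := by
  obtain ⟨m', rfl⟩ : ∃ k, m = k + 3 := ⟨m - 3, by omega⟩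
  have hsum := SimpleGraph.sum_degrees_eq_twice_card_edges ((SimpleGraph.cycleGraph (m' + 3))ᶜ)
  have hdeg : ∀ v : Fin (m' + 3),
      ((SimpleGraph.cycleGraph (m' + 3))ᶜ).degree v = m' := by
    intro v
    rw [SimpleGraph.degree_compl, SimpleGraph.cycleGraph_degree_three_le]
    simp
  rw [Finset.sum_congr rfl (fun v _ => hdeg v), Finset.sum_const, Finset.card_univ,
    Fintype.card_fin, smul_eq_mul] at hsum
  have h3 : m' + 3 - 3 = m' := by omega
  rw [h3]
  exact hsum.symm

lemma card_T2c [NeZero m] (hm : 4 ≤ m) :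
    (Finset.univ.image fun k : Fin m =>
      ({s((some (k-1) : Option (Fin m)), some k), s((some k : Option (Fin m)), some (k+1))} :
        Finset (Sym2 (Option (Fin m))))).card = m := by
  rw [Finset.card_image_of_injective _ ?_, Finset.card_univ, Fintype.card_fin]
  intro k k' h
  rw [finset_pair_eq_pair_iff] at h
  simp only [Sym2.eq_iff, Option.some.injEq] at h
  rcases h with ⟨⟨h1, h2⟩ | ⟨h1, h2⟩, -⟩ | ⟨⟨h1, h2⟩ | ⟨h1, h2⟩, h3⟩
  · exact h2
  · exfalso; apply fin_two_ne_zero'' hm; linear_combination h2 - h1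
  · -- k - 1 = k' and k = k' + 1
    exfalso
    rcases h3 with ⟨h4, h5⟩ | ⟨h4, h5⟩
    · apply fin_two_ne_zero'' hm; linear_combination h4 - h1
    · apply fin_one_ne_zero'' hm; linear_combination h4 - h1
  · -- k - 1 = k' + 1 and k = k'
    exfalso; apply fin_two_ne_zero'' hm; linear_combination h2 - h1

lemma card_wheelT [NeZero m] (hm : 4 ≤ m) : 2 * (wheelT m).card = m * (m + 3) := by
  have hpair_card : ∀ i j : Fin m, i ≠ j →
      ({s((none : Option (Fin m)), some i), s((none : Option (Fin m)), some j)} :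
        Finset (Sym2 (Option (Fin m)))).card = 2 := by
    intro i j hij
    rw [Finset.card_pair]
    intro h
    exact hij (hub_edge_inj h)
  have hcyc_card : ∀ k : Fin m,
      ({s((some (k-1) : Option (Fin m)), some k), s((some k : Option (Fin m)), some (k+1))} :
        Finset (Sym2 (Option (Fin m)))).card = 2 := by
    intro k
    rw [Finset.card_pair]
    intro h
    rw [Sym2.eq_iff] at h
    rcases h with ⟨h1, h2⟩ | ⟨h1, h2⟩
    · injection h1 with h1; exact fin_sub_ne_self hm k h1
    · injection h1 with h1; exact fin_sub_ne_add hm k h1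
  -- disjointness
  have d1 : Disjoint
      (Finset.univ.image fun i : Fin m =>
        ({s((none : Option (Fin m)), some i)} : Finset (Sym2 (Option (Fin m)))))
      (Finset.univ.image fun k : Fin m =>
        ({s((some k : Option (Fin m)), some (k+1))} : Finset (Sym2 (Option (Fin m))))) := by
    rw [Finset.disjoint_left]
    rintro S hS hS'
    simp only [Finset.mem_image, Finset.mem_univ, true_and] at hS hS'
    obtain ⟨i, rfl⟩ := hS
    obtain ⟨k, hk⟩ := hS'
    simp only [Finset.singleton_inj, Sym2.eq_iff] at hk
    simp_all
  have done1 : ∀ S ∈ (Finset.univ.image fun i : Fin m =>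
        ({s((none : Option (Fin m)), some i)} : Finset (Sym2 (Option (Fin m))))) ∪
      (Finset.univ.image fun k : Fin m =>
        ({s((some k : Option (Fin m)), some (k+1))} : Finset (Sym2 (Option (Fin m))))),
      S.card = 1 := by
    intro S hS
    rw [Finset.mem_union] at hS
    rcases hS with hS | hS <;>
    · simp only [Finset.mem_image, Finset.mem_univ, true_and] at hS
      obtain ⟨i, rfl⟩ := hS
      simp
  have dtwo2 : ∀ S ∈ (((SimpleGraph.cycleGraph m)ᶜ.edgeFinset).image (hubPair m)) ∪
      (Finset.univ.image fun k : Fin m =>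
        ({s((some (k-1) : Option (Fin m)), some k), s((some k : Option (Fin m)), some (k+1))} :
          Finset (Sym2 (Option (Fin m))))), S.card = 2 := by
    intro S hS
    rw [Finset.mem_union] at hS
    rcases hS with hS | hS
    · simp only [Finset.mem_image] at hS
      obtain ⟨e, he, rfl⟩ := hS
      induction e with
      | _ i j =>
        rw [SimpleGraph.mem_edgeFinset, SimpleGraph.mem_edgeSet, SimpleGraph.compl_adj] at he
        exact hpair_card i j he.1
    · simp only [Finset.mem_image, Finset.mem_univ, true_and] at hS
      obtain ⟨k, rfl⟩ := hS
      exact hcyc_card k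
  have d2 : Disjoint
      ((Finset.univ.image fun i : Fin m =>
        ({s((none : Option (Fin m)), some i)} : Finset (Sym2 (Option (Fin m))))) ∪
      (Finset.univ.image fun k : Fin m =>
        ({s((some k : Option (Fin m)), some (k+1))} : Finset (Sym2 (Option (Fin m))))))
      ((((SimpleGraph.cycleGraph m)ᶜ.edgeFinset).image (hubPair m)) ∪
      (Finset.univ.image fun k : Fin m =>
        ({s((some (k-1) : Option (Fin m)), some k), s((some k : Option (Fin m)), some (k+1))} :
          Finset (Sym2 (Option (Fin m)))))) := by
    rw [Finset.disjoint_left]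
    intro S hS hS'
    have := done1 S hS
    have := dtwo2 S hS'
    omega
  have d3 : Disjoint (((SimpleGraph.cycleGraph m)ᶜ.edgeFinset).image (hubPair m))
      (Finset.univ.image fun k : Fin m =>
        ({s((some (k-1) : Option (Fin m)), some k), s((some k : Option (Fin m)), some (k+1))} :
          Finset (Sym2 (Option (Fin m))))) := by
    rw [Finset.disjoint_left]
    intro S hS hS'
    simp only [Finset.mem_image, Finset.mem_univ, true_and] at hS hS'
    obtain ⟨e, he, rfl⟩ := hS
    obtain ⟨k, hk⟩ := hS'
    induction e with
    | _ i j =>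
      simp only [hubPair_mk] at hk
      rw [finset_pair_eq_pair_iff] at hk
      simp [Sym2.eq_iff] at hk
  have hT : wheelT m =
      ((Finset.univ.image fun i : Fin m =>
        ({s((none : Option (Fin m)), some i)} : Finset (Sym2 (Option (Fin m))))) ∪
      (Finset.univ.image fun k : Fin m =>
        ({s((some k : Option (Fin m)), some (k+1))} : Finset (Sym2 (Option (Fin m)))))) ∪
      ((((SimpleGraph.cycleGraph m)ᶜ.edgeFinset).image (hubPair m)) ∪
      (Finset.univ.image fun k : Fin m =>
        ({s((some (k-1) : Option (Fin m)), some k), s((some k : Option (Fin m)), some (k+1))} :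
          Finset (Sym2 (Option (Fin m)))))) := by
    rw [wheelT]; rw [Finset.union_assoc, Finset.union_assoc]
  rw [hT, Finset.card_union_of_disjoint d2, Finset.card_union_of_disjoint d1,
    Finset.card_union_of_disjoint d3, card_T1h hm, card_T1c hm, card_T2h hm, card_T2c hm]
  have h4 := card_compl_cycle hm
  have h5 : m * (m + 3) = 2 * (m + m) + 2 * m + m * (m - 3) := by
    have : m * (m + 3) = m * (m - 3) + 6 * m := by
      cases' Nat.exists_eq_add_of_le hm with c hc
      subst hc
      have h6 : 4 + c - 3 = c + 1 := by omega
      rw [h6]; ring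
    omega
  omega

end Aux

/-- For every `n ≥ 5`, the geodesic path number of the wheel graph on `n` vertices
(a cycle on `n - 1` vertices together with a universal hub vertex) is `(n-1)(n+2)/2`. -/
theorem statement_18 (n : ℕ) (hn : 5 ≤ n) :
    (wheelGraph (n - 1)).tgp = (n - 1) * (n + 2) / 2 := by
  have hm : 4 ≤ n - 1 := by omega
  haveI : NeZero (n - 1) := ⟨by omega⟩
  rw [SimpleGraph.tgp, gps_eq_wheelT hm, Set.ncard_coe_finset]
  have h := card_wheelT hm
  have h2 : (n - 1) * ((n - 1) + 3) = (n - 1) * (n + 2) := by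
    congr 1; omega
  rw [h2] at h
  set P := (n - 1) * (n + 2)
  omega
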